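/- Let α be a real number with α ≥ (1+√5)/2. Let a, b be in the Wiener class, let E_a, E_b be bounded operators on ℓ², set A = T(a) + E_a, B = T(b) + E_b, let c be the convolution of a and b, and set E_c = AB − T(c). Then α‖c‖_W + ‖E_c‖₂ ≤ (α‖a‖_W + ‖E_a‖₂)(α‖b‖_W + ‖E_b‖₂). (In particular, the norm ‖A‖_QT := α‖a‖_W + ‖E_a‖₂ is sub-multiplicative on Quasi-Toeplitz matrices for every α ≥ (1+√5)/2.) -/

import Mathlib

open scoped ENNReal NNReal
open Function

local notation "ℓ2" => lp (fun _ : ℕ => ℂ) 2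

/-- The bounded operator `T` on `ℓ²` is the Toeplitz operator with symbol coefficients
`a : ℤ → ℂ`, i.e. `(T x)_i = ∑_{j} a_{j-i} x_j` (indices in `ℕ`). -/
def IsToeplitzOp (T : lp (fun _ : ℕ => ℂ) 2 →L[ℂ] lp (fun _ : ℕ => ℂ) 2)
    (a : ℤ → ℂ) : Prop :=
  ∀ (x : lp (fun _ : ℕ => ℂ) 2) (i : ℕ), (T x) i = ∑' j : ℕ, a ((j : ℤ) - (i : ℤ)) * x j

lemma qt_enorm_tsum_le {ι : Type*} (f : ι → ℂ) :
    (‖∑' i, f i‖₊ : ℝ≥0∞) ≤ ∑' i, (‖f i‖₊ : ℝ≥0∞) := by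
  by_cases hs : Summable fun i => ‖f i‖₊
  · rw [← ENNReal.coe_tsum hs]
    exact ENNReal.coe_le_coe.2 (nnnorm_tsum_le hs)
  · have : (∑' i, (‖f i‖₊ : ℝ≥0∞)) = ⊤ := by
      by_contra h
      exact hs (ENNReal.tsum_coe_ne_top_iff_summable.1 h)
    rw [this]; exact le_top

lemma qt_cs (u v : ℕ → ℝ≥0∞) :
    (∑' j, u j * v j) ^ 2 ≤ (∑' j, (u j) ^ 2) * (∑' j, (v j) ^ 2) := by
  have hpq : Real.HolderConjugate 2 2 := Real.HolderConjugate.two_two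
  have h := ENNReal.lintegral_mul_le_Lp_mul_Lq MeasureTheory.Measure.count hpq
      (measurable_of_countable u).aemeasurable (measurable_of_countable v).aemeasurable
  rw [MeasureTheory.lintegral_count, MeasureTheory.lintegral_count,
    MeasureTheory.lintegral_count] at h
  have hr : ∀ w : ℕ → ℝ≥0∞, (∑' j, w j ^ (2:ℝ)) = ∑' j, w j ^ (2:ℕ) := by
    intro w; congr 1; ext j; rw [← ENNReal.rpow_natCast (w j) 2]; norm_num
  calc (∑' j, u j * v j) ^ 2
      ≤ ((∑' j, u j ^ (2:ℝ)) ^ (1/(2:ℝ)) * (∑' j, v j ^ (2:ℝ)) ^ (1/(2:ℝ))) ^ 2 :=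
        pow_le_pow_left₀ zero_le h 2
    _ = (∑' j, (u j) ^ 2) * (∑' j, (v j) ^ 2) := by
        rw [mul_pow, ← ENNReal.rpow_natCast (_ ^ (1/(2:ℝ))) 2,
          ← ENNReal.rpow_natCast ((∑' j, v j ^ (2:ℝ)) ^ (1/(2:ℝ))) 2,
          ← ENNReal.rpow_mul, ← ENNReal.rpow_mul, hr u, hr v]
        norm_num

lemma qt_half_sq (z : ℝ≥0∞) : z ^ (1/2:ℝ) * z ^ (1/2:ℝ) = z := by
  rw [← pow_two, ← ENNReal.rpow_natCast (z ^ (1/2:ℝ)) 2, ← ENNReal.rpow_mul]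
  norm_num

lemma qt_ofReal_norm_sq (f : ℓ2) :
    ENNReal.ofReal (‖f‖ ^ (2:ℝ)) = ∑' i, (‖f i‖₊ : ℝ≥0∞) ^ 2 := by
  have hp : (0:ℝ) < (2 : ℝ≥0∞).toReal := by norm_num
  have hs : Summable fun i => ‖f i‖ ^ ((2:ℝ≥0∞)).toReal :=
    (memℓp_gen_iff hp).1 (lp.memℓp f)
  have h2 : ((2:ℝ≥0∞)).toReal = (2:ℝ) := by norm_num
  rw [show ‖f‖ ^ (2:ℝ) = ‖f‖ ^ ((2:ℝ≥0∞)).toReal by rw [h2],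
    lp.norm_rpow_eq_tsum hp f,
    ENNReal.ofReal_tsum_of_nonneg (fun i => Real.rpow_nonneg (norm_nonneg _) _) hs]
  congr 1; ext i
  rw [h2, show ‖f i‖ ^ (2:ℝ) = ‖f i‖ ^ (2:ℕ) from Real.rpow_natCast _ 2,
    ENNReal.ofReal_pow (norm_nonneg _), ofReal_norm, enorm_eq_nnnorm]

lemma qt_schur (D : ℓ2 →L[ℂ] ℓ2) (H : ℕ → ℕ → ℂ) (M : ℝ) (hM : 0 ≤ M)
    (hD : ∀ (x : ℓ2) (i : ℕ), (D x) i = ∑' j, H i j * x j)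
    (hrow : ∀ i, (∑' j, (‖H i j‖₊ : ℝ≥0∞)) ≤ ENNReal.ofReal M)
    (hcol : ∀ j, (∑' i, (‖H i j‖₊ : ℝ≥0∞)) ≤ ENNReal.ofReal M) :
    ‖D‖ ≤ M := by
  refine D.opNorm_le_bound hM fun x => ?_
  set h : ℕ → ℕ → ℝ≥0∞ := fun i j => (‖H i j‖₊ : ℝ≥0∞) with hh
  set y : ℕ → ℝ≥0∞ := fun j => (‖x j‖₊ : ℝ≥0∞) with hy
  have step1 : ∀ i, (‖(D x) i‖₊ : ℝ≥0∞) ≤ ∑' j, h i j * y j := fun i => by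
    rw [hD x i]
    refine (qt_enorm_tsum_le _).trans_eq ?_
    congr 1; ext j; simp [hh, hy, nnnorm_mul, ENNReal.coe_mul]
  have step2 : ∀ i, (‖(D x) i‖₊ : ℝ≥0∞) ^ 2 ≤ ENNReal.ofReal M * ∑' j, h i j * y j ^ 2 := by
    intro i
    have cs := qt_cs (fun j => (h i j) ^ (1/2:ℝ)) (fun j => (h i j) ^ (1/2:ℝ) * y j)
    have e1 : (∑' j, (h i j) ^ (1/2:ℝ) * ((h i j) ^ (1/2:ℝ) * y j)) = ∑' j, h i j * y j := by
      congr 1; ext j; rw [← mul_assoc, qt_half_sq]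
    have e2 : (∑' j, ((h i j) ^ (1/2:ℝ)) ^ 2) = ∑' j, h i j := by
      congr 1; ext j; rw [pow_two, qt_half_sq]
    have e3 : (∑' j, ((h i j) ^ (1/2:ℝ) * y j) ^ 2) = ∑' j, h i j * y j ^ 2 := by
      congr 1; ext j; rw [mul_pow, pow_two, qt_half_sq]
    rw [e1, e2, e3] at cs
    calc (‖(D x) i‖₊ : ℝ≥0∞) ^ 2 ≤ (∑' j, h i j * y j) ^ 2 :=
          pow_le_pow_left₀ zero_le (step1 i) 2
      _ ≤ (∑' j, h i j) * (∑' j, h i j * y j ^ 2) := cs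
      _ ≤ ENNReal.ofReal M * ∑' j, h i j * y j ^ 2 := mul_le_mul_left (hrow i) _
  have step3 : (∑' i, (‖(D x) i‖₊ : ℝ≥0∞) ^ 2) ≤
      (ENNReal.ofReal M) ^ 2 * ∑' j, y j ^ 2 := by
    calc (∑' i, (‖(D x) i‖₊ : ℝ≥0∞) ^ 2)
        ≤ ∑' i, ENNReal.ofReal M * ∑' j, h i j * y j ^ 2 := ENNReal.tsum_le_tsum step2
      _ = ENNReal.ofReal M * ∑' i, ∑' j, h i j * y j ^ 2 := ENNReal.tsum_mul_left
      _ = ENNReal.ofReal M * ∑' j, ∑' i, h i j * y j ^ 2 := by rw [ENNReal.tsum_comm]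
      _ = ENNReal.ofReal M * ∑' j, (∑' i, h i j) * y j ^ 2 := by
          congr 1; congr 1; ext j; rw [ENNReal.tsum_mul_right]
      _ ≤ ENNReal.ofReal M * ∑' j, ENNReal.ofReal M * y j ^ 2 := by
          refine mul_le_mul_right (ENNReal.tsum_le_tsum fun j => ?_) _
          exact mul_le_mul_left (hcol j) _
      _ = (ENNReal.ofReal M) ^ 2 * ∑' j, y j ^ 2 := by
          rw [ENNReal.tsum_mul_left, ← mul_assoc, ← pow_two]
  have key : ENNReal.ofReal (‖D x‖ ^ (2:ℝ)) ≤ ENNReal.ofReal (M ^ 2 * ‖x‖ ^ (2:ℝ)) := by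
    rw [qt_ofReal_norm_sq (D x)]
    refine step3.trans_eq ?_
    rw [ENNReal.ofReal_mul (by positivity), ENNReal.ofReal_pow hM, qt_ofReal_norm_sq x]
  have key2 : ‖D x‖ ^ (2:ℝ) ≤ M ^ 2 * ‖x‖ ^ (2:ℝ) :=
    (ENNReal.ofReal_le_ofReal_iff (by positivity)).1 key
  have e1 : ∀ r : ℝ, r ^ (2:ℝ) = r ^ (2:ℕ) := fun r => by
    rw [show (2:ℝ) = ((2:ℕ):ℝ) by norm_num, Real.rpow_natCast]
  have key3 : ‖D x‖ ^ (2:ℕ) ≤ (M * ‖x‖) ^ (2:ℕ) := by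
    calc ‖D x‖ ^ (2:ℕ) = ‖D x‖ ^ (2:ℝ) := (e1 _).symm
      _ ≤ M ^ 2 * ‖x‖ ^ (2:ℝ) := key2
      _ = (M * ‖x‖) ^ (2:ℕ) := by rw [e1, mul_pow]
  have := Real.sqrt_le_sqrt (by exact_mod_cast key3 : ‖D x‖ ^ 2 ≤ (M * ‖x‖) ^ 2)
  rwa [Real.sqrt_sq (norm_nonneg _), Real.sqrt_sq (mul_nonneg hM (norm_nonneg _))] at this

lemma qt_sumW {a : ℤ → ℂ} (ha : Summable fun k : ℤ => ‖a k‖) :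
    (∑' k : ℤ, (‖a k‖₊ : ℝ≥0∞)) = ENNReal.ofReal (∑' k : ℤ, ‖a k‖) := by
  rw [ENNReal.ofReal_tsum_of_nonneg (fun k => norm_nonneg _) ha]
  congr 1; ext k; rw [ofReal_norm, enorm_eq_nnnorm]

lemma qt_toeplitz_norm_le {a : ℤ → ℂ} (ha : Summable fun k : ℤ => ‖a k‖)
    (T : ℓ2 →L[ℂ] ℓ2) (hT : ∀ (x : ℓ2) (i : ℕ), (T x) i = ∑' j : ℕ, a ((j:ℤ) - (i:ℤ)) * x j) :
    ‖T‖ ≤ ∑' k : ℤ, ‖a k‖ := by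
  refine qt_schur T (fun i j => a ((j:ℤ) - (i:ℤ))) _ (tsum_nonneg fun k => norm_nonneg _)
    hT (fun i => ?_) (fun j => ?_)
  · rw [← qt_sumW ha]
    exact ENNReal.tsum_comp_le_tsum_of_injective
      (f := fun j : ℕ => (j:ℤ) - (i:ℤ))
      (fun p q h => by simp only [sub_left_inj, Nat.cast_inj] at h; exact h)
      (fun k => (‖a k‖₊ : ℝ≥0∞))
  · rw [← qt_sumW ha]
    exact ENNReal.tsum_comp_le_tsum_of_injective
      (f := fun i : ℕ => (j:ℤ) - (i:ℤ))
      (fun p q h => by simp only [sub_right_inj, Nat.cast_inj] at h; exact h)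
      (fun k => (‖a k‖₊ : ℝ≥0∞))

lemma qt_conv {a b c : ℤ → ℂ} (ha : Summable fun k : ℤ => ‖a k‖)
    (hb : Summable fun k : ℤ => ‖b k‖) (hc : ∀ k : ℤ, c k = ∑' m : ℤ, a m * b (k - m)) :
    Summable (fun k : ℤ => ‖c k‖) ∧
      (∑' k : ℤ, ‖c k‖) ≤ (∑' k : ℤ, ‖a k‖) * (∑' k : ℤ, ‖b k‖) := by
  have key : (∑' k : ℤ, (‖c k‖₊ : ℝ≥0∞)) ≤
      ENNReal.ofReal ((∑' k : ℤ, ‖a k‖) * (∑' k : ℤ, ‖b k‖)) := by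
    calc (∑' k : ℤ, (‖c k‖₊ : ℝ≥0∞))
        ≤ ∑' k : ℤ, ∑' m : ℤ, (‖a m‖₊ : ℝ≥0∞) * (‖b (k - m)‖₊ : ℝ≥0∞) := by
          refine ENNReal.tsum_le_tsum fun k => ?_
          rw [hc k]
          refine (qt_enorm_tsum_le _).trans_eq ?_
          congr 1; ext m; simp [nnnorm_mul, ENNReal.coe_mul]
      _ = ∑' m : ℤ, ∑' k : ℤ, (‖a m‖₊ : ℝ≥0∞) * (‖b (k - m)‖₊ : ℝ≥0∞) := ENNReal.tsum_comm
      _ = ∑' m : ℤ, (‖a m‖₊ : ℝ≥0∞) * ∑' k : ℤ, (‖b (k - m)‖₊ : ℝ≥0∞) := by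
          congr 1; ext m; rw [ENNReal.tsum_mul_left]
      _ = ∑' m : ℤ, (‖a m‖₊ : ℝ≥0∞) * ∑' k : ℤ, (‖b k‖₊ : ℝ≥0∞) := by
          congr 1; ext m; congr 1
          exact (Equiv.subRight m).tsum_eq fun k => (‖b k‖₊ : ℝ≥0∞)
      _ = (∑' k : ℤ, (‖a k‖₊ : ℝ≥0∞)) * ∑' k : ℤ, (‖b k‖₊ : ℝ≥0∞) := ENNReal.tsum_mul_right
      _ = ENNReal.ofReal ((∑' k : ℤ, ‖a k‖) * (∑' k : ℤ, ‖b k‖)) := by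
          rw [qt_sumW ha, qt_sumW hb,
            ENNReal.ofReal_mul (tsum_nonneg fun k => norm_nonneg _)]
  have hsum : Summable fun k : ℤ => ‖c k‖ := by
    have hne : (∑' k : ℤ, (‖c k‖₊ : ℝ≥0∞)) ≠ ⊤ :=
      ne_top_of_le_ne_top ENNReal.ofReal_ne_top key
    have := ENNReal.tsum_coe_ne_top_iff_summable.1 hne
    simpa [← NNReal.summable_coe, coe_nnnorm] using this
  refine ⟨hsum, ?_⟩
  have := (qt_sumW hsum) ▸ key
  exact (ENNReal.ofReal_le_ofReal_iff
    (mul_nonneg (tsum_nonneg fun k => norm_nonneg _) (tsum_nonneg fun k => norm_nonneg _))).1 this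

noncomputable def qtK (a b : ℤ → ℂ) (i j : ℕ) : ℂ :=
  ∑' l : ℕ, a (-((l:ℤ) + 1) - (i:ℤ)) * b ((j:ℤ) - (-((l:ℤ) + 1)))

set_option maxHeartbeats 2000000 in
lemma qt_hankel_entry {a b c : ℤ → ℂ} (ha : Summable fun k : ℤ => ‖a k‖)
    (hb : Summable fun k : ℤ => ‖b k‖) (hc : ∀ k : ℤ, c k = ∑' m : ℤ, a m * b (k - m))
    (Ta Tb Tc : ℓ2 →L[ℂ] ℓ2)
    (hTa : ∀ (x : ℓ2) (i : ℕ), (Ta x) i = ∑' j : ℕ, a ((j:ℤ) - (i:ℤ)) * x j)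
    (hTb : ∀ (x : ℓ2) (i : ℕ), (Tb x) i = ∑' j : ℕ, b ((j:ℤ) - (i:ℤ)) * x j)
    (hTc : ∀ (x : ℓ2) (i : ℕ), (Tc x) i = ∑' j : ℕ, c ((j:ℤ) - (i:ℤ)) * x j)
    (x : ℓ2) (i : ℕ) :
    ((Tc - Ta ∘L Tb) x) i = ∑' j : ℕ, qtK a b i j * x j := by
  classical
  set f : ℤ → ℕ → ℂ := fun k j => a (k - (i:ℤ)) * b ((j:ℤ) - k) * x j with hf
  -- summability of the double family of norms
  have hxb : ∀ j : ℕ, ‖x j‖ ≤ ‖x‖ := fun j =>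
    lp.norm_apply_le_norm (by norm_num) x j
  have hbinj : ∀ k : ℤ, Summable fun j : ℕ => ‖b ((j:ℤ) - k)‖ := fun k =>
    hb.comp_injective (fun p q h => by omega)
  have hbn : ∀ k : ℤ, ∑' j : ℕ, ‖b ((j:ℤ) - k)‖ ≤ ∑' m : ℤ, ‖b m‖ := fun k =>
    Summable.tsum_le_tsum_of_inj (fun j : ℕ => (j:ℤ) - k)
      (fun p q h => by simp only [sub_left_inj, Nat.cast_inj] at h; exact h)
      (fun m _ => norm_nonneg _) (fun j => le_rfl) (hbinj k) hb
  have hinner : ∀ k : ℤ, Summable fun j : ℕ => ‖f k j‖ := by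
    intro k
    refine Summable.of_nonneg_of_le (fun j => norm_nonneg _) (fun j => ?_)
      (((hbinj k).mul_right (‖x‖)).mul_left ‖a (k - (i:ℤ))‖)
    calc ‖f k j‖ = ‖a (k - (i:ℤ))‖ * (‖b ((j:ℤ) - k)‖ * ‖x j‖) := by
          simp [hf, norm_mul, mul_assoc]
      _ ≤ ‖a (k - (i:ℤ))‖ * (‖b ((j:ℤ) - k)‖ * ‖x‖) := by
          refine mul_le_mul_of_nonneg_left ?_ (norm_nonneg _)
          exact mul_le_mul_of_nonneg_left (hxb j) (norm_nonneg _)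
  have hinner_sum : ∀ k : ℤ, (∑' j : ℕ, ‖f k j‖) ≤
      ‖a (k - (i:ℤ))‖ * ((∑' m : ℤ, ‖b m‖) * ‖x‖) := by
    intro k
    have h1 : (∑' j : ℕ, ‖f k j‖) =
        ‖a (k - (i:ℤ))‖ * ∑' j : ℕ, ‖b ((j:ℤ) - k)‖ * ‖x j‖ := by
      rw [← tsum_mul_left]
      exact tsum_congr fun j => by simp [hf, norm_mul, mul_assoc]
    rw [h1]
    refine mul_le_mul_of_nonneg_left ?_ (norm_nonneg _)
    have hbx : Summable fun j : ℕ => ‖b ((j:ℤ) - k)‖ * ‖x j‖ :=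
      Summable.of_nonneg_of_le (fun j => mul_nonneg (norm_nonneg _) (norm_nonneg _))
        (fun j => mul_le_mul_of_nonneg_left (hxb j) (norm_nonneg _))
        ((hbinj k).mul_right ‖x‖)
    calc (∑' j : ℕ, ‖b ((j:ℤ) - k)‖ * ‖x j‖)
        ≤ ∑' j : ℕ, ‖b ((j:ℤ) - k)‖ * ‖x‖ :=
          Summable.tsum_le_tsum (fun j => mul_le_mul_of_nonneg_left (hxb j) (norm_nonneg _))
            hbx ((hbinj k).mul_right _)
      _ = (∑' j : ℕ, ‖b ((j:ℤ) - k)‖) * ‖x‖ := tsum_mul_right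
      _ ≤ (∑' m : ℤ, ‖b m‖) * ‖x‖ :=
          mul_le_mul_of_nonneg_right (hbn k) (norm_nonneg _)
  have SFn : Summable fun p : ℤ × ℕ => ‖f p.1 p.2‖ := by
    refine (summable_prod_of_nonneg (fun p => norm_nonneg _)).2 ⟨hinner, ?_⟩
    refine Summable.of_nonneg_of_le (fun k => tsum_nonneg fun j => norm_nonneg _)
      hinner_sum ?_
    have : Summable fun k : ℤ => ‖a (k - (i:ℤ))‖ :=
      ha.comp_injective (fun p q h => by omega)
    exact this.mul_right _
  have SF : Summable fun p : ℤ × ℕ => f p.1 p.2 := SFn.of_norm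
  -- identity
  have E1 : (Tc x) i = ∑' j : ℕ, ∑' k : ℤ, f k j := by
    rw [hTc x i]
    refine tsum_congr fun j => ?_
    have h1 : c ((j:ℤ) - (i:ℤ)) = ∑' k : ℤ, a (k - (i:ℤ)) * b ((j:ℤ) - k) := by
      rw [hc]
      rw [← (Equiv.subRight (i:ℤ)).tsum_eq (fun m => a m * b ((j:ℤ) - (i:ℤ) - m))]
      exact tsum_congr fun k => by
        simp only [Equiv.subRight_apply]
        rw [show (j:ℤ) - (i:ℤ) - (k - (i:ℤ)) = (j:ℤ) - k by ring]
    rw [h1, ← tsum_mul_right]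
  have E2 : (∑' j : ℕ, ∑' k : ℤ, f k j) = ∑' k : ℤ, ∑' j : ℕ, f k j := Summable.tsum_comm SF
  have E3 : (Ta (Tb x)) i = ∑' n : ℕ, ∑' j : ℕ, f ((n:ℤ)) j := by
    rw [hTa]
    refine tsum_congr fun n => ?_
    rw [hTb x n, ← tsum_mul_left]
    exact tsum_congr fun j => (mul_assoc _ _ _).symm
  set g : ℤ → ℂ := fun k => ∑' j : ℕ, f k j with hg
  have hgs : Summable g := SF.prod
  have E5 : (∑' k : ℤ, g k) = (∑' n : ℕ, g (n:ℤ)) + ∑' n : ℕ, g (-((n:ℤ) + 1)) :=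
    tsum_of_nat_of_neg_add_one (hgs.comp_injective (fun p q h => by omega))
      (hgs.comp_injective (fun p q h => by omega))
  have E6 : (∑' n : ℕ, g (-((n:ℤ) + 1))) = ∑' j : ℕ, qtK a b i j * x j := by
    have hinj : Injective (fun p : ℕ × ℕ => ((-((p.1:ℤ) + 1), p.2) : ℤ × ℕ)) := by
      intro p q h
      simp only [Prod.mk.injEq] at h
      exact Prod.ext (by omega) h.2
    have hswapn : Summable fun p : ℕ × ℕ => ‖f (-((p.1:ℤ) + 1)) p.2‖ := by
      refine (summable_prod_of_nonneg (fun p => norm_nonneg _)).2 ⟨fun l => hinner (-((l:ℤ) + 1)), ?_⟩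
      refine Summable.of_nonneg_of_le (fun l => tsum_nonneg fun j => norm_nonneg _)
        (fun l => hinner_sum (-((l:ℤ) + 1))) ?_
      have hai : Summable fun l : ℕ => ‖a (-((l:ℤ) + 1) - (i:ℤ))‖ :=
        ha.comp_injective (fun p q h => by omega)
      exact hai.mul_right _
    have hswap : Summable (Function.uncurry fun l j : ℕ => f (-((l:ℤ) + 1)) j) :=
      hswapn.of_norm
    have hcomm : (∑' (n : ℕ) (j : ℕ), f (-((n:ℤ) + 1)) j)
        = ∑' (j : ℕ) (n : ℕ), f (-((n:ℤ) + 1)) j :=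
      (Summable.tsum_comm (f := fun l j : ℕ => f (-((l:ℤ) + 1)) j) hswap).symm
    calc (∑' n : ℕ, g (-((n:ℤ) + 1))) = ∑' (j : ℕ) (n : ℕ), f (-((n:ℤ) + 1)) j := hcomm
      _ = ∑' j : ℕ, qtK a b i j * x j := by
          refine tsum_congr fun j => ?_
          rw [qtK, ← tsum_mul_right]
  have : ((Tc - Ta ∘L Tb) x) i = (Tc x) i - (Ta (Tb x)) i := by
    simp [ContinuousLinearMap.sub_apply, ContinuousLinearMap.comp_apply, lp.coeFn_sub,
      Pi.sub_apply]
  rw [this, E1, E2, E3, ← E6]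
  rw [show (∑' k : ℤ, ∑' j : ℕ, f k j) = ∑' k : ℤ, g k from rfl,
    show (∑' n : ℕ, ∑' j : ℕ, f ((n:ℤ)) j) = ∑' n : ℕ, g ((n:ℤ)) from rfl, E5]
  ring

lemma qt_hankel_norm {a b c : ℤ → ℂ} (ha : Summable fun k : ℤ => ‖a k‖)
    (hb : Summable fun k : ℤ => ‖b k‖) (hc : ∀ k : ℤ, c k = ∑' m : ℤ, a m * b (k - m))
    (Ta Tb Tc : ℓ2 →L[ℂ] ℓ2)
    (hTa : ∀ (x : ℓ2) (i : ℕ), (Ta x) i = ∑' j : ℕ, a ((j:ℤ) - (i:ℤ)) * x j)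
    (hTb : ∀ (x : ℓ2) (i : ℕ), (Tb x) i = ∑' j : ℕ, b ((j:ℤ) - (i:ℤ)) * x j)
    (hTc : ∀ (x : ℓ2) (i : ℕ), (Tc x) i = ∑' j : ℕ, c ((j:ℤ) - (i:ℤ)) * x j) :
    ‖Tc - Ta ∘L Tb‖ ≤ (∑' k : ℤ, ‖a k‖) * (∑' k : ℤ, ‖b k‖) := by
  set A := ∑' k : ℤ, ‖a k‖ with hA
  set B := ∑' k : ℤ, ‖b k‖ with hB
  have hA0 : 0 ≤ A := tsum_nonneg fun k => norm_nonneg _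
  have hB0 : 0 ≤ B := tsum_nonneg fun k => norm_nonneg _
  have hAB : ENNReal.ofReal (A * B) =
      (∑' k : ℤ, (‖a k‖₊ : ℝ≥0∞)) * (∑' k : ℤ, (‖b k‖₊ : ℝ≥0∞)) := by
    rw [qt_sumW ha, qt_sumW hb, ENNReal.ofReal_mul hA0]
  have hKle : ∀ i j : ℕ, (‖qtK a b i j‖₊ : ℝ≥0∞) ≤
      ∑' l : ℕ, (‖a (-((l:ℤ) + 1) - (i:ℤ))‖₊ : ℝ≥0∞) *
        (‖b ((j:ℤ) - (-((l:ℤ) + 1)))‖₊ : ℝ≥0∞) := by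
    intro i j
    refine (qt_enorm_tsum_le _).trans_eq ?_
    congr 1; ext l; simp [nnnorm_mul, ENNReal.coe_mul]
  refine qt_schur _ (qtK a b) _ (mul_nonneg hA0 hB0)
    (fun x i => qt_hankel_entry ha hb hc Ta Tb Tc hTa hTb hTc x i) (fun i => ?_) (fun j => ?_)
  · calc (∑' j : ℕ, (‖qtK a b i j‖₊ : ℝ≥0∞))
        ≤ ∑' (j : ℕ) (l : ℕ), (‖a (-((l:ℤ) + 1) - (i:ℤ))‖₊ : ℝ≥0∞) *
            (‖b ((j:ℤ) - (-((l:ℤ) + 1)))‖₊ : ℝ≥0∞) := ENNReal.tsum_le_tsum (hKle i)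
      _ = ∑' (l : ℕ) (j : ℕ), (‖a (-((l:ℤ) + 1) - (i:ℤ))‖₊ : ℝ≥0∞) *
            (‖b ((j:ℤ) - (-((l:ℤ) + 1)))‖₊ : ℝ≥0∞) := ENNReal.tsum_comm
      _ = ∑' (l : ℕ), (‖a (-((l:ℤ) + 1) - (i:ℤ))‖₊ : ℝ≥0∞) *
            ∑' (j : ℕ), (‖b ((j:ℤ) - (-((l:ℤ) + 1)))‖₊ : ℝ≥0∞) := by
          refine tsum_congr fun l => ?_; rw [ENNReal.tsum_mul_left]
      _ ≤ ∑' (l : ℕ), (‖a (-((l:ℤ) + 1) - (i:ℤ))‖₊ : ℝ≥0∞) *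
            ∑' k : ℤ, (‖b k‖₊ : ℝ≥0∞) := by
          refine ENNReal.tsum_le_tsum fun l => mul_le_mul_right ?_ _
          refine ENNReal.tsum_comp_le_tsum_of_injective
            (f := fun j : ℕ => (j:ℤ) - (-((l:ℤ) + 1))) ?_ _
          intro p q h
          have h' : (p:ℤ) - (-((l:ℤ) + 1)) = (q:ℤ) - (-((l:ℤ) + 1)) := h
          omega
      _ = (∑' (l : ℕ), (‖a (-((l:ℤ) + 1) - (i:ℤ))‖₊ : ℝ≥0∞)) *
            ∑' k : ℤ, (‖b k‖₊ : ℝ≥0∞) := ENNReal.tsum_mul_right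
      _ ≤ (∑' k : ℤ, (‖a k‖₊ : ℝ≥0∞)) * ∑' k : ℤ, (‖b k‖₊ : ℝ≥0∞) := by
          refine mul_le_mul_left ?_ _
          refine ENNReal.tsum_comp_le_tsum_of_injective
            (f := fun l : ℕ => -((l:ℤ) + 1) - (i:ℤ)) ?_ _
          intro p q h
          have h' : -((p:ℤ) + 1) - (i:ℤ) = -((q:ℤ) + 1) - (i:ℤ) := h
          omega
      _ = ENNReal.ofReal (A * B) := hAB.symm
  · calc (∑' i : ℕ, (‖qtK a b i j‖₊ : ℝ≥0∞))
        ≤ ∑' (i : ℕ) (l : ℕ), (‖a (-((l:ℤ) + 1) - (i:ℤ))‖₊ : ℝ≥0∞) *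
            (‖b ((j:ℤ) - (-((l:ℤ) + 1)))‖₊ : ℝ≥0∞) := ENNReal.tsum_le_tsum (fun i => hKle i j)
      _ = ∑' (l : ℕ) (i : ℕ), (‖a (-((l:ℤ) + 1) - (i:ℤ))‖₊ : ℝ≥0∞) *
            (‖b ((j:ℤ) - (-((l:ℤ) + 1)))‖₊ : ℝ≥0∞) := ENNReal.tsum_comm
      _ = ∑' (l : ℕ), (∑' (i : ℕ), (‖a (-((l:ℤ) + 1) - (i:ℤ))‖₊ : ℝ≥0∞)) *
            (‖b ((j:ℤ) - (-((l:ℤ) + 1)))‖₊ : ℝ≥0∞) := by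
          refine tsum_congr fun l => ?_; rw [ENNReal.tsum_mul_right]
      _ ≤ ∑' (l : ℕ), (∑' k : ℤ, (‖a k‖₊ : ℝ≥0∞)) *
            (‖b ((j:ℤ) - (-((l:ℤ) + 1)))‖₊ : ℝ≥0∞) := by
          refine ENNReal.tsum_le_tsum fun l => mul_le_mul_left ?_ _
          refine ENNReal.tsum_comp_le_tsum_of_injective
            (f := fun i : ℕ => -((l:ℤ) + 1) - (i:ℤ)) ?_ _
          intro p q h
          have h' : -((l:ℤ) + 1) - (p:ℤ) = -((l:ℤ) + 1) - (q:ℤ) := h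
          omega
      _ = (∑' k : ℤ, (‖a k‖₊ : ℝ≥0∞)) *
            ∑' (l : ℕ), (‖b ((j:ℤ) - (-((l:ℤ) + 1)))‖₊ : ℝ≥0∞) := ENNReal.tsum_mul_left
      _ ≤ (∑' k : ℤ, (‖a k‖₊ : ℝ≥0∞)) * ∑' k : ℤ, (‖b k‖₊ : ℝ≥0∞) := by
          refine mul_le_mul_right ?_ _
          refine ENNReal.tsum_comp_le_tsum_of_injective
            (f := fun l : ℕ => (j:ℤ) - (-((l:ℤ) + 1))) ?_ _
          intro p q h
          have h' : (j:ℤ) - (-((p:ℤ) + 1)) = (j:ℤ) - (-((q:ℤ) + 1)) := h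
          omega
      _ = ENNReal.ofReal (A * B) := hAB.symm

/-- For every `α ≥ (1+√5)/2`, the norm `‖T(a)+E‖_QT = α‖a‖_W + ‖E‖₂`
is sub-multiplicative: if `A = T(a) + E_a`, `B = T(b) + E_b` with `a, b` in the Wiener
class and `E_a, E_b` bounded on `ℓ²`, `c` is the convolution of `a` and `b`, and
`E_c = AB - T(c)`, then `α‖c‖_W + ‖E_c‖₂ ≤ (α‖a‖_W + ‖E_a‖₂)(α‖b‖_W + ‖E_b‖₂)`. -/
theorem qt_norm_submultiplicative
    (α : ℝ) (hα : (1 + Real.sqrt 5) / 2 ≤ α)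
    (a b : ℤ → ℂ) (ha : Summable fun k : ℤ => ‖a k‖) (hb : Summable fun k : ℤ => ‖b k‖)
    (c : ℤ → ℂ) (hc : ∀ k : ℤ, c k = ∑' m : ℤ, a m * b (k - m))
    (Ta Tb Tc Ea Eb : lp (fun _ : ℕ => ℂ) 2 →L[ℂ] lp (fun _ : ℕ => ℂ) 2)
    (hTa : IsToeplitzOp Ta a) (hTb : IsToeplitzOp Tb b) (hTc : IsToeplitzOp Tc c) :
    α * (∑' k : ℤ, ‖c k‖) + ‖((Ta + Ea) ∘L (Tb + Eb)) - Tc‖ ≤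
      (α * (∑' k : ℤ, ‖a k‖) + ‖Ea‖) * (α * (∑' k : ℤ, ‖b k‖) + ‖Eb‖) := by
  set A := ∑' k : ℤ, ‖a k‖ with hA
  set B := ∑' k : ℤ, ‖b k‖ with hB
  set C := ∑' k : ℤ, ‖c k‖ with hC
  have hA0 : 0 ≤ A := tsum_nonneg fun k => norm_nonneg _
  have hB0 : 0 ≤ B := tsum_nonneg fun k => norm_nonneg _
  have hs5 : Real.sqrt 5 ^ 2 = 5 := Real.sq_sqrt (by norm_num)
  have hs5' : (0:ℝ) ≤ Real.sqrt 5 := Real.sqrt_nonneg 5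
  have hα1 : 1 ≤ α := by nlinarith
  have hα2 : α + 1 ≤ α ^ 2 := by nlinarith
  have hTa' : ‖Ta‖ ≤ A := qt_toeplitz_norm_le ha Ta hTa
  have hTb' : ‖Tb‖ ≤ B := qt_toeplitz_norm_le hb Tb hTb
  have hCle : C ≤ A * B := (qt_conv ha hb hc).2
  have hH : ‖Tc - Ta ∘L Tb‖ ≤ A * B := qt_hankel_norm ha hb hc Ta Tb Tc hTa hTb hTc
  have expand : ((Ta + Ea) ∘L (Tb + Eb)) - Tc
      = -(Tc - Ta ∘L Tb) + (Ta ∘L Eb + (Ea ∘L Tb + Ea ∘L Eb)) := by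
    rw [ContinuousLinearMap.add_comp, ContinuousLinearMap.comp_add,
      ContinuousLinearMap.comp_add]
    abel
  have hEc : ‖((Ta + Ea) ∘L (Tb + Eb)) - Tc‖ ≤
      A * B + (A * ‖Eb‖ + (‖Ea‖ * B + ‖Ea‖ * ‖Eb‖)) := by
    rw [expand]
    refine (norm_add_le _ _).trans ?_
    refine add_le_add ((norm_neg (Tc - Ta ∘L Tb)).le.trans hH) ?_
    refine (norm_add_le _ _).trans (add_le_add ?_ ?_)
    · exact (Ta.opNorm_comp_le Eb).trans
        (mul_le_mul_of_nonneg_right hTa' (norm_nonneg _))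
    refine (norm_add_le _ _).trans (add_le_add ?_ ?_)
    · exact (Ea.opNorm_comp_le Tb).trans
        (mul_le_mul_of_nonneg_left hTb' (norm_nonneg _))
    · exact Ea.opNorm_comp_le Eb
  have hαC : α * C ≤ α * (A * B) :=
    mul_le_mul_of_nonneg_left hCle (by linarith)
  nlinarith [mul_nonneg (by nlinarith : (0:ℝ) ≤ α ^ 2 - α - 1) (mul_nonneg hA0 hB0),
    mul_nonneg (by linarith : (0:ℝ) ≤ α - 1) (mul_nonneg hA0 (norm_nonneg Eb)),
    mul_nonneg (by linarith : (0:ℝ) ≤ α - 1) (mul_nonneg (norm_nonneg Ea) hB0),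
    norm_nonneg Ea, norm_nonneg Eb]
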